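/- The optimal cost function satisfies the optimality equation J* = T(J*), i.e., for every state x, J*(x) = inf_{u ∈ U(x)} { g(x,u) + Σ_{x' ∈ S} J*(x') q(x'|x,u) }. -/

import Mathlib

/-!
Common framework: countable-state/countable-control total-cost MDPs under the
General Convergence (GC) condition, following H. Yu, "On Convergence of Value
Iteration for a Class of Total Cost Markov Decision Processes".

States `S` and controls `C` are countable types; `U x` is the nonempty set of
feasible controls at `x`; `g x u ∈ (-∞, +∞]` is the one-stage cost (an `EReal`
that is never `⊥` on feasible pairs); `q x u x'` are transition probabilities.

A policy is represented by its conditional control distributions given the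
(reversed) history of past (state, control) pairs and the current state.
Expectations are computed by explicit countable sums, splitting every
extended-real quantity into its positive and negative parts (computed in
`ℝ≥0∞`) and recombining with the convention `∞ - ∞ = ∞`.
-/

open scoped ENNReal Classical
open Filter

noncomputable section

namespace GCMDP

/-- The positive part of an extended real, as an element of `ℝ≥0∞`. -/
def ePos (a : EReal) : ℝ≥0∞ := if a = ⊤ then ⊤ else ENNReal.ofReal a.toReal

/-- Recombine a positive part `P` and a negative part `N` into an extended real,
with the convention `∞ - ∞ = ∞`. -/
def signedSum (P N : ℝ≥0∞) : EReal := if P = ⊤ then ⊤ else (P : EReal) - (N : EReal)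

variable {S C : Type}

/-- A (randomized, history-dependent) policy: to each reversed list of past
(state, control) pairs and each current state it assigns a mass function on
controls. -/
def Policy (S C : Type) : Type := List (S × C) → S → C → ℝ≥0∞

/-- A policy is valid for the control constraint `U` if each of its conditional
distributions is a probability distribution concentrated on the feasible set. -/
def IsPolicy (U : S → Set C) (π : Policy S C) : Prop :=
  ∀ (h : List (S × C)) (x : S), (∑' u : C, π h x u) = 1 ∧ ∀ u : C, π h x u ≠ 0 → u ∈ U x

/-- A policy is nonrandomized if each of its conditional distributions is a
point mass. -/
def Nonrandomized (π : Policy S C) : Prop :=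
  ∀ (h : List (S × C)) (x : S), ∃ u : C, ∀ u' : C, π h x u' = if u' = u then 1 else 0

/-- The initial state recorded in a reversed history `h` with current state `x`. -/
def initOf (h : List (S × C)) (x : S) : S := ((h.getLast?).map Prod.fst).getD x

/-- A policy is semi-Markov if its decision at time `k` depends on the history
only through the time `k`, the initial state and the current state. -/
def IsSemiMarkov (π : Policy S C) : Prop :=
  ∀ (h h' : List (S × C)) (x : S), h.length = h'.length → initOf h x = initOf h' x →
    π h x = π h' x

/-- A policy is Markov if its decision at time `k` depends on the history only
through the time `k` and the current state. -/
def IsMarkov (π : Policy S C) : Prop :=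
  ∀ (h h' : List (S × C)) (x : S), h.length = h'.length → π h x = π h' x

/-- A policy is stationary if its decision depends only on the current state. -/
def IsStationary (π : Policy S C) : Prop :=
  ∀ (h h' : List (S × C)) (x : S), π h x = π h' x

/-- The stationary policy determined by a one-step decision rule `μ`. -/
def toPolicy (μ : S → C → ℝ≥0∞) : Policy S C := fun _ x u => μ x u

/-- Probability that, starting from `x₀` and following policy `π`, the first
transitions produce the reversed history `h` and current state `y`. -/
def histProb (q : S → C → S → ℝ≥0∞) (π : Policy S C) (x₀ : S) :
    List (S × C) → S → ℝ≥0∞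
  | [], y => if y = x₀ then 1 else 0
  | (z, u) :: h, y => histProb q π x₀ h z * π h z u * q z u y

/-- Marginal distribution of the state `x_n` at time `n` under policy `π`
started at `x₀`. -/
def sDist (q : S → C → S → ℝ≥0∞) (π : Policy S C) (x₀ : S) (n : ℕ) (y : S) : ℝ≥0∞ :=
  ∑' h : {l : List (S × C) // l.length = n}, histProb q π x₀ h.1 y

/-- Joint distribution of the state-control pair `(x_n, u_n)` at time `n`. -/
def saDist (q : S → C → S → ℝ≥0∞) (π : Policy S C) (x₀ : S) (n : ℕ) (y : S) (u : C) : ℝ≥0∞ :=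
  ∑' h : {l : List (S × C) // l.length = n}, histProb q π x₀ h.1 y * π h.1 y u

/-- Expectation `E^π_{x₀}[f(x_n, u_n)]` of a nonnegative cost. -/
def costAt (q : S → C → S → ℝ≥0∞) (π : Policy S C) (x₀ : S) (n : ℕ)
    (f : S → C → ℝ≥0∞) : ℝ≥0∞ :=
  ∑' y : S, ∑' u : C, saDist q π x₀ n y u * f y u

/-- Positive part `g₊` of the one-stage cost. -/
def gPos (g : S → C → EReal) (x : S) (u : C) : ℝ≥0∞ := ePos (g x u)

/-- Negative part `g₋` of the one-stage cost. -/
def gNeg (g : S → C → EReal) (x : S) (u : C) : ℝ≥0∞ := ePos (-(g x u))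

/-- `J_π^+(x) = E^π_x[∑_k g₊(x_k,u_k)]`. -/
def Jplus (q : S → C → S → ℝ≥0∞) (g : S → C → EReal) (π : Policy S C) (x : S) : ℝ≥0∞ :=
  ∑' n : ℕ, costAt q π x n (gPos g)

/-- `J_π^-(x) = E^π_x[∑_k g₋(x_k,u_k)]`. -/
def Jminus (q : S → C → S → ℝ≥0∞) (g : S → C → EReal) (π : Policy S C) (x : S) : ℝ≥0∞ :=
  ∑' n : ℕ, costAt q π x n (gNeg g)

/-- The total cost `J_π(x) = J_π^+(x) - J_π^-(x)` of a policy. -/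
def Jpol (q : S → C → S → ℝ≥0∞) (g : S → C → EReal) (π : Policy S C) (x : S) : EReal :=
  signedSum (Jplus q g π x) (Jminus q g π x)

/-- The general convergence (GC) condition: `sup_π J_π^-(x) < ∞` for all `x`. -/
def GC (U : S → Set C) (q : S → C → S → ℝ≥0∞) (g : S → C → EReal) : Prop :=
  ∀ x : S, (⨆ π ∈ {π' : Policy S C | IsPolicy U π'}, Jminus q g π x) ≠ ⊤

/-- The optimal cost function `J*(x) = inf_π J_π(x)`. -/
def Jstar (U : S → Set C) (q : S → C → S → ℝ≥0∞) (g : S → C → EReal) (x : S) : EReal :=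
  ⨅ π ∈ {π' : Policy S C | IsPolicy U π'}, Jpol q g π x

/-- `J^{*+}(x) = inf_π J_π^+(x)`. -/
def JstarPlus (U : S → Set C) (q : S → C → S → ℝ≥0∞) (g : S → C → EReal) (x : S) : ℝ≥0∞ :=
  ⨅ π ∈ {π' : Policy S C | IsPolicy U π'}, Jplus q g π x

/-- `J^{*-}(x) = inf_π J_π^-(x)`. -/
def JstarMinus (U : S → Set C) (q : S → C → S → ℝ≥0∞) (g : S → C → EReal) (x : S) : ℝ≥0∞ :=
  ⨅ π ∈ {π' : Policy S C | IsPolicy U π'}, Jminus q g π x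

/-- The general one-stage dynamic programming operator with one-stage cost `c`:
`(opT c J)(x) = inf_{u ∈ U(x)} { c(x,u) + ∑_{x'} J(x') q(x'|x,u) }`, where the
bracket is evaluated by separating positive and negative parts, with the
convention `∞ - ∞ = ∞`. -/
def opT (U : S → Set C) (q : S → C → S → ℝ≥0∞) (c : S → C → EReal)
    (J : S → EReal) (x : S) : EReal :=
  ⨅ u ∈ U x,
    signedSum (ePos (c x u) + ∑' x' : S, q x u x' * ePos (J x'))
      (ePos (-(c x u)) + ∑' x' : S, q x u x' * ePos (-(J x')))

/-- The dynamic programming operator `T` of the total cost problem. -/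
def Top (U : S → Set C) (q : S → C → S → ℝ≥0∞) (g : S → C → EReal) :
    (S → EReal) → S → EReal :=
  opT U q g

/-- The operator `T₊` associated with the positive part `g₊` of the cost. -/
def TopPlus (U : S → Set C) (q : S → C → S → ℝ≥0∞) (g : S → C → EReal) :
    (S → EReal) → S → EReal :=
  opT U q (fun x u => max (g x u) 0)

/-- The operator `T₋` associated with the (negated) negative part `-g₋` of the cost. -/
def TopMinus (U : S → Set C) (q : S → C → S → ℝ≥0∞) (g : S → C → EReal) :
    (S → EReal) → S → EReal :=
  opT U q (fun x u => min (g x u) 0)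

/-- The cost-free operator `T₀`. -/
def TopZero (U : S → Set C) (q : S → C → S → ℝ≥0∞) :
    (S → EReal) → S → EReal :=
  opT U q (fun _ _ => 0)

/-- The monotone-increasing modification `T̃(J) = max{J, T(J)}` of `T`. -/
def Ttil (U : S → Set C) (q : S → C → S → ℝ≥0∞) (g : S → C → EReal)
    (J : S → EReal) (x : S) : EReal :=
  max (J x) (Top U q g J x)

/-- The operator `T_μ` associated with a stationary decision rule `μ`. -/
def Tmu (q : S → C → S → ℝ≥0∞) (g : S → C → EReal) (μ : S → C → ℝ≥0∞)
    (J : S → EReal) (x : S) : EReal :=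
  signedSum (∑' u : C, μ x u * (ePos (g x u) + ∑' x' : S, q x u x' * ePos (J x')))
    (∑' u : C, μ x u * (ePos (-(g x u)) + ∑' x' : S, q x u x' * ePos (-(J x'))))

/-- Expectation `E^π_{x₀}[J(x_n)]` of an extended-real function of the state at
time `n` (positive and negative parts combined with the convention `∞-∞=∞`). -/
def expState (q : S → C → S → ℝ≥0∞) (π : Policy S C) (x₀ : S) (n : ℕ)
    (J : S → EReal) : EReal :=
  signedSum (∑' y : S, sDist q π x₀ n y * ePos (J y))
    (∑' y : S, sDist q π x₀ n y * ePos (-(J y)))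

/-- The expected tail cost `E^π_{x₀}[∑_{k ≥ n} g(x_k, u_k)]`. -/
def tailCost (q : S → C → S → ℝ≥0∞) (g : S → C → EReal) (π : Policy S C)
    (x₀ : S) (n : ℕ) : EReal :=
  signedSum (∑' k : ℕ, costAt q π x₀ (n + k) (gPos g))
    (∑' k : ℕ, costAt q π x₀ (n + k) (gNeg g))

/-- Membership in the class `A₀(S)`: functions nowhere `-∞` such that
`inf_{n ≥ 1} T₀ⁿ(min{J, 0})` is nowhere `-∞`. -/
def MemA0 (U : S → Set C) (q : S → C → S → ℝ≥0∞) (J : S → EReal) : Prop :=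
  (∀ x : S, J x ≠ ⊥) ∧
    ∀ x : S, (⨅ n : ℕ, (TopZero U q)^[n + 1] (fun y => min (J y) 0) x) ≠ ⊥


section Aux

variable {S C : Type}

/-! ### `ePos` and `signedSum` arithmetic -/

lemma ePos_coe_ennreal (P : ℝ≥0∞) : ePos (P : EReal) = P := by
  rcases eq_or_ne P ⊤ with rfl | hP
  · simp [ePos]
  · rw [ePos, if_neg (by simpa [EReal.coe_ennreal_eq_top_iff] using hP),
      EReal.toReal_coe_ennreal, ENNReal.ofReal_toReal hP]

lemma ePos_coe_real (r : ℝ) : ePos (r : EReal) = ENNReal.ofReal r := by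
  rw [ePos, if_neg (by simp), EReal.toReal_coe]

lemma ePos_bot : ePos (⊥ : EReal) = 0 := by simp [ePos]

lemma ePos_ne_top {a : EReal} (ha : a ≠ ⊤) : ePos a ≠ ⊤ := by
  rw [ePos, if_neg ha]; exact ENNReal.ofReal_ne_top

lemma ePos_neg_ne_top {a : EReal} (ha : a ≠ ⊥) : ePos (-a) ≠ ⊤ :=
  ePos_ne_top (by simpa [EReal.neg_eq_top_iff] using ha)

lemma ePos_mono {a b : EReal} (h : a ≤ b) : ePos a ≤ ePos b := by
  rcases eq_or_ne b ⊤ with rfl | hb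
  · exact le_top
  rcases eq_or_ne a ⊥ with rfl | ha
  · simp [ePos_bot]
  have ha' : a ≠ ⊤ := fun h' => hb (top_le_iff.mp (h' ▸ h))
  rcases eq_or_ne b ⊥ with rfl | hb'
  · have : a = ⊥ := le_bot_iff.mp h
    exact absurd this ha
  rw [ePos, if_neg ha', ePos, if_neg hb]
  exact ENNReal.ofReal_le_ofReal (EReal.toReal_le_toReal h ha hb)

lemma coe_ennreal_toReal {P : ℝ≥0∞} (hP : P ≠ ⊤) :
    (P : EReal) = ((P.toReal : ℝ) : EReal) := by
  conv_lhs => rw [← ENNReal.ofReal_toReal hP]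
  rw [EReal.coe_ennreal_ofReal, max_eq_left ENNReal.toReal_nonneg]

lemma signedSum_eq_coe_sub {P N : ℝ≥0∞} (hP : P ≠ ⊤) (hN : N ≠ ⊤) :
    signedSum P N = ((P.toReal - N.toReal : ℝ) : EReal) := by
  rw [signedSum, if_neg hP, coe_ennreal_toReal hP, coe_ennreal_toReal hN, ← EReal.coe_sub]

lemma signedSum_top_left {N : ℝ≥0∞} : signedSum ⊤ N = ⊤ := by simp [signedSum]

lemma signedSum_ne_top {P N : ℝ≥0∞} (hP : P ≠ ⊤) (hN : N ≠ ⊤) : signedSum P N ≠ ⊤ := by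
  rw [signedSum_eq_coe_sub hP hN]; exact EReal.coe_ne_top _

lemma signedSum_ne_bot {P N : ℝ≥0∞} (hN : N ≠ ⊤) : signedSum P N ≠ ⊥ := by
  rcases eq_or_ne P ⊤ with rfl | hP
  · simp [signedSum]
  · rw [signedSum_eq_coe_sub hP hN]; exact EReal.coe_ne_bot _

lemma signedSum_le_signedSum_iff {P₁ N₁ P₂ N₂ : ℝ≥0∞} (hN₁ : N₁ ≠ ⊤) (hN₂ : N₂ ≠ ⊤) :
    signedSum P₁ N₁ ≤ signedSum P₂ N₂ ↔ P₁ + N₂ ≤ P₂ + N₁ := by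
  rcases eq_or_ne P₂ ⊤ with rfl | hP₂
  · simp [signedSum_top_left, le_top, top_add]
  rcases eq_or_ne P₁ ⊤ with rfl | hP₁
  · rw [signedSum_top_left, top_add]
    constructor
    · intro h; exact absurd (top_le_iff.mp h) (signedSum_ne_top hP₂ hN₂)
    · intro h; exact absurd (top_le_iff.mp h) (ENNReal.add_ne_top.mpr ⟨hP₂, hN₁⟩)
  rw [signedSum_eq_coe_sub hP₁ hN₁, signedSum_eq_coe_sub hP₂ hN₂, EReal.coe_le_coe_iff,
    ← ENNReal.toReal_le_toReal (ENNReal.add_ne_top.mpr ⟨hP₁, hN₂⟩)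
      (ENNReal.add_ne_top.mpr ⟨hP₂, hN₁⟩),
    ENNReal.toReal_add hP₁ hN₂, ENNReal.toReal_add hP₂ hN₁]
  constructor <;> intro h <;> linarith

lemma signedSum_le_signedSum {P₁ N₁ P₂ N₂ : ℝ≥0∞} (hN₁ : N₁ ≠ ⊤) (hN₂ : N₂ ≠ ⊤)
    (h : P₁ + N₂ ≤ P₂ + N₁) : signedSum P₁ N₁ ≤ signedSum P₂ N₂ :=
  (signedSum_le_signedSum_iff hN₁ hN₂).mpr h

lemma signedSum_ePos {a : EReal} (ha : a ≠ ⊥) : signedSum (ePos a) (ePos (-a)) = a := by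
  rcases eq_or_ne a ⊤ with rfl | ha'
  · simp [signedSum, ePos]
  · lift a to ℝ using ⟨ha', ha⟩
    rw [← EReal.coe_neg, ePos_coe_real, ePos_coe_real,
      signedSum_eq_coe_sub ENNReal.ofReal_ne_top ENNReal.ofReal_ne_top]
    rcases le_total a 0 with h | h
    · simp [ENNReal.ofReal_eq_zero.mpr h, ENNReal.toReal_ofReal (neg_nonneg.mpr h)]
    · simp [ENNReal.ofReal_eq_zero.mpr (neg_nonpos.mpr h), ENNReal.toReal_ofReal h]

lemma signedSum_add_const {P N ε : ℝ≥0∞} (hN : N ≠ ⊤) (hε : ε ≠ ⊤) :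
    signedSum (P + ε) N = signedSum P N + (ε : EReal) := by
  rcases eq_or_ne P ⊤ with rfl | hP
  · rw [top_add, signedSum_top_left]
    rw [coe_ennreal_toReal hε, EReal.top_add_coe]
  · rw [signedSum_eq_coe_sub (ENNReal.add_ne_top.mpr ⟨hP, hε⟩) hN,
      signedSum_eq_coe_sub hP hN, coe_ennreal_toReal hε, ← EReal.coe_add,
      ENNReal.toReal_add hP hε]
    norm_cast
    ring

lemma neg_coe_le_signedSum {P N : ℝ≥0∞} (hN : N ≠ ⊤) : -(N : EReal) ≤ signedSum P N := by
  rcases eq_or_ne P ⊤ with rfl | hP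
  · simp [signedSum_top_left]
  · rw [signedSum_eq_coe_sub hP hN, coe_ennreal_toReal hN, ← EReal.coe_neg, EReal.coe_le_coe_iff]
    have := ENNReal.toReal_nonneg (a := P); linarith

end Aux
/-! ### Histories and the one-step decomposition -/

/-- The policy obtained from `π` after a first step at `x` with control `u`. -/
def shiftPol (π : Policy S C) (x : S) (u : C) : Policy S C := fun h y => π (h ++ [(x, u)]) y

lemma initOf_cons (w : S) (v : C) (l : List (S × C)) (y : S) :
    initOf ((w, v) :: l) y = initOf l w := by
  cases l with
  | nil => rfl
  | cons p t =>
      rw [initOf, initOf, List.getLast?_cons_cons]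
      cases hgl : (p :: t).getLast? with
      | none => exact absurd hgl (by simp)
      | some a => simp [hgl]

lemma histProb_eq_zero {q : S → C → S → ℝ≥0∞} {σ : Policy S C} {z : S}
    {l : List (S × C)} {y : S} (h : initOf l y ≠ z) : histProb q σ z l y = 0 := by
  induction l generalizing y with
  | nil => rw [histProb, if_neg (by simpa [initOf] using h)]
  | cons p t ih =>
      obtain ⟨w, v⟩ := p
      rw [initOf_cons] at h
      rw [histProb, ih h, zero_mul, zero_mul]

lemma histProb_congr {q : S → C → S → ℝ≥0∞} {σ₁ σ₂ : Policy S C} {z : S}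
    (hag : ∀ h y, initOf h y = z → σ₁ h y = σ₂ h y) (l : List (S × C)) (y : S) :
    histProb q σ₁ z l y = histProb q σ₂ z l y := by
  induction l generalizing y with
  | nil => rfl
  | cons p t ih =>
      obtain ⟨w, v⟩ := p
      rw [histProb, histProb, ih w]
      by_cases hi : initOf t w = z
      · rw [hag t w hi]
      · rw [histProb_eq_zero (σ := σ₂) hi, zero_mul, zero_mul, zero_mul, zero_mul]

lemma histProb_append (q : S → C → S → ℝ≥0∞) (π : Policy S C) (x₀ : S)
    (l : List (S × C)) (w : S) (v : C) (y : S) :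
    histProb q π x₀ (l ++ [(w, v)]) y
      = (if w = x₀ then 1 else 0) * (π [] w v *
          (q w v (initOf l y) * histProb q (shiftPol π w v) (initOf l y) l y)) := by
  induction l generalizing y with
  | nil =>
      show histProb q π x₀ [] w * π [] w v * q w v y
        = (if w = x₀ then 1 else 0) * (π [] w v *
            (q w v (initOf [] y) * histProb q (shiftPol π w v) (initOf [] y) [] y))
      have h1 : initOf ([] : List (S × C)) y = y := rfl
      rw [h1]
      show (if w = x₀ then (1:ℝ≥0∞) else 0) * π [] w v * q w v y
        = (if w = x₀ then 1 else 0) * (π [] w v * (q w v y * (if y = y then (1:ℝ≥0∞) else 0)))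
      rw [if_pos rfl]
      ring
  | cons p t ih =>
      obtain ⟨a, b⟩ := p
      show histProb q π x₀ (t ++ [(w,v)]) a * π (t ++ [(w,v)]) a b * q a b y = _
      rw [ih a, initOf_cons]
      show _ = (if w = x₀ then 1 else 0) * (π [] w v * (q w v (initOf t a) *
        (histProb q (shiftPol π w v) (initOf t a) t a * shiftPol π w v t a b * q a b y)))
      show (if w = x₀ then (1:ℝ≥0∞)  else 0) * (π [] w v * (q w v (initOf t a) *
        histProb q (shiftPol π w v) (initOf t a) t a)) * shiftPol π w v t a b * q a b y = _
      ring

/-- Collapse the intermediate-state sum onto the (deterministic) initial state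
of a history. -/
lemma tsum_q_histProb (q : S → C → S → ℝ≥0∞) (σ : Policy S C)
    (w : S) (v : C) (l : List (S × C)) (y : S) (c : ℝ≥0∞) :
    q w v (initOf l y) * histProb q σ (initOf l y) l y * c
      = ∑' z : S, q w v z * histProb q σ z l y * c := by
  refine (tsum_eq_single (f := fun z => q w v z * histProb q σ z l y * c)
    (initOf l y) fun z hz => ?_).symm
  show q w v z * histProb q σ z l y * c = 0
  rw [histProb_eq_zero (fun h => hz h.symm), mul_zero, zero_mul]

instance : Unique {l : List (S × C) // l.length = 0} where
  default := ⟨[], rfl⟩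
  uniq := by rintro ⟨l, hl⟩; ext1; exact List.length_eq_zero_iff.mp hl

/-- Appending the first transition to a history of length `n`. -/
def concatEquiv (n : ℕ) : ({l : List (S × C) // l.length = n} × (S × C))
    ≃ {l : List (S × C) // l.length = n + 1} where
  toFun p := ⟨p.1.1 ++ [p.2], by simp [p.1.2]⟩
  invFun l := (⟨l.1.dropLast, by simp [l.2]⟩,
    l.1.getLast (List.ne_nil_of_length_pos (by simp [l.2])))
  left_inv p := by
    ext : 1
    · exact Subtype.ext List.dropLast_concat
    · exact List.getLast_concat
  right_inv l := by
    exact Subtype.ext (List.dropLast_append_getLast _)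

lemma saDist_zero (q : S → C → S → ℝ≥0∞) (π : Policy S C) (x y : S) (u : C) :
    saDist q π x 0 y u = (if y = x then 1 else 0) * π [] y u := by
  rw [saDist, tsum_eq_single (⟨[], rfl⟩ : {l : List (S × C) // l.length = 0})
    (fun h h' => absurd (Unique.uniq _ h) h')]
  rfl

lemma costAt_zero (q : S → C → S → ℝ≥0∞) (π : Policy S C) (x : S) (f : S → C → ℝ≥0∞) :
    costAt q π x 0 f = ∑' u : C, π [] x u * f x u := by
  rw [costAt, tsum_eq_single x (fun y hy => by
    simp [saDist_zero, if_neg hy])]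
  exact tsum_congr fun u => by rw [saDist_zero, if_pos rfl, one_mul]
private lemma tsum_comm4 {α β γ δ : Type} (f : α → β → γ → δ → ℝ≥0∞) :
    ∑' (a : α) (b : β) (c : γ) (d : δ), f a b c d
      = ∑' (c : γ) (d : δ) (a : α) (b : β), f a b c d := by
  calc ∑' (a : α) (b : β) (c : γ) (d : δ), f a b c d
      = ∑' (a : α) (c : γ) (b : β) (d : δ), f a b c d :=
        tsum_congr fun a => ENNReal.tsum_comm
    _ = ∑' (c : γ) (a : α) (b : β) (d : δ), f a b c d := ENNReal.tsum_comm
    _ = ∑' (c : γ) (a : α) (d : δ) (b : β), f a b c d :=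
        tsum_congr fun c => tsum_congr fun a => ENNReal.tsum_comm
    _ = ∑' (c : γ) (d : δ) (a : α) (b : β), f a b c d :=
        tsum_congr fun c => ENNReal.tsum_comm

lemma saDist_succ (q : S → C → S → ℝ≥0∞) (π : Policy S C) (x : S) (n : ℕ) (y : S) (u' : C) :
    saDist q π x (n+1) y u'
      = ∑' v : C, π [] x v * ∑' z : S, q x v z * saDist q (shiftPol π x v) z n y u' := by
  have key : ∀ l : {l : List (S × C) // l.length = n},
      (∑' a : S × C, histProb q π x (l.1 ++ [a]) y * π (l.1 ++ [a]) y u')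
        = ∑' (v : C) (z : S),
            π [] x v * (q x v z * (histProb q (shiftPol π x v) z l.1 y
              * shiftPol π x v l.1 y u')) := by
    intro l
    rw [ENNReal.tsum_prod']
    rw [tsum_eq_single x (fun w hw => ENNReal.tsum_eq_zero.mpr fun v => by
      rw [histProb_append, if_neg hw, zero_mul, zero_mul])]
    refine tsum_congr fun v => ?_
    rw [histProb_append, if_pos rfl, one_mul]
    calc π [] x v * (q x v (initOf l.1 y) * histProb q (shiftPol π x v) (initOf l.1 y) l.1 y)
          * π (l.1 ++ [(x, v)]) y u'
        = q x v (initOf l.1 y) * histProb q (shiftPol π x v) (initOf l.1 y) l.1 y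
            * (π [] x v * π (l.1 ++ [(x, v)]) y u') := by ring
      _ = ∑' z : S, q x v z * histProb q (shiftPol π x v) z l.1 y
            * (π [] x v * π (l.1 ++ [(x, v)]) y u') :=
          tsum_q_histProb q (shiftPol π x v) x v l.1 y _
      _ = ∑' z : S, π [] x v * (q x v z * (histProb q (shiftPol π x v) z l.1 y
            * π (l.1 ++ [(x, v)]) y u')) := tsum_congr fun z => by ring
      _ = ∑' z : S, π [] x v * (q x v z * (histProb q (shiftPol π x v) z l.1 y
            * shiftPol π x v l.1 y u')) := rfl
  calc saDist q π x (n+1) y u'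
      = ∑' p : {l : List (S × C) // l.length = n} × (S × C),
          histProb q π x ((concatEquiv n p).1 : List (S × C)) y
            * π ((concatEquiv n p).1 : List (S × C)) y u' :=
        ((concatEquiv n).tsum_eq (fun h => histProb q π x h.1 y * π h.1 y u')).symm
    _ = ∑' (l : {l : List (S × C) // l.length = n}) (a : S × C),
          histProb q π x (l.1 ++ [a]) y * π (l.1 ++ [a]) y u' := ENNReal.tsum_prod'
    _ = ∑' (l : {l : List (S × C) // l.length = n}) (v : C) (z : S),
          π [] x v * (q x v z * (histProb q (shiftPol π x v) z l.1 y
            * shiftPol π x v l.1 y u')) := tsum_congr key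
    _ = ∑' (v : C) (l : {l : List (S × C) // l.length = n}) (z : S),
          π [] x v * (q x v z * (histProb q (shiftPol π x v) z l.1 y
            * shiftPol π x v l.1 y u')) := ENNReal.tsum_comm
    _ = ∑' (v : C) (z : S) (l : {l : List (S × C) // l.length = n}),
          π [] x v * (q x v z * (histProb q (shiftPol π x v) z l.1 y
            * shiftPol π x v l.1 y u')) := tsum_congr fun v => ENNReal.tsum_comm
    _ = ∑' v : C, π [] x v * ∑' z : S, q x v z * saDist q (shiftPol π x v) z n y u' := by
        refine tsum_congr fun v => ?_
        have hz : ∀ z : S, (∑' l : {l : List (S × C) // l.length = n},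
            q x v z * (histProb q (shiftPol π x v) z l.1 y * shiftPol π x v l.1 y u'))
              = q x v z * saDist q (shiftPol π x v) z n y u' := fun z => by
          rw [ENNReal.tsum_mul_left]; rfl
        calc ∑' (z : S) (l : {l : List (S × C) // l.length = n}),
              π [] x v * (q x v z * (histProb q (shiftPol π x v) z l.1 y
                * shiftPol π x v l.1 y u'))
            = ∑' (z : S), π [] x v * ∑' (l : {l : List (S × C) // l.length = n}),
                q x v z * (histProb q (shiftPol π x v) z l.1 y * shiftPol π x v l.1 y u') :=
              tsum_congr fun z => ENNReal.tsum_mul_left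
          _ = π [] x v * ∑' (z : S), ∑' (l : {l : List (S × C) // l.length = n}),
                q x v z * (histProb q (shiftPol π x v) z l.1 y * shiftPol π x v l.1 y u') :=
              ENNReal.tsum_mul_left
          _ = π [] x v * ∑' z : S, q x v z * saDist q (shiftPol π x v) z n y u' := by
              rw [tsum_congr hz]

lemma costAt_succ (q : S → C → S → ℝ≥0∞) (π : Policy S C) (x : S) (n : ℕ) (f : S → C → ℝ≥0∞) :
    costAt q π x (n+1) f
      = ∑' v : C, π [] x v * ∑' z : S, q x v z * costAt q (shiftPol π x v) z n f := by
  calc costAt q π x (n+1) f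
      = ∑' (y : S) (u' : C), saDist q π x (n+1) y u' * f y u' := rfl
    _ = ∑' (y : S) (u' : C) (v : C) (z : S), π [] x v * (q x v z *
          (saDist q (shiftPol π x v) z n y u' * f y u')) := by
        refine tsum_congr fun y => tsum_congr fun u' => ?_
        rw [saDist_succ, ← ENNReal.tsum_mul_right]
        refine tsum_congr fun v => ?_
        calc (π [] x v * ∑' z : S, q x v z * saDist q (shiftPol π x v) z n y u') * f y u'
            = π [] x v * ((∑' z : S, q x v z * saDist q (shiftPol π x v) z n y u') * f y u') := by
              ring
          _ = π [] x v * (∑' z : S, q x v z * saDist q (shiftPol π x v) z n y u' * f y u') := by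
              rw [ENNReal.tsum_mul_right]
          _ = ∑' z : S, π [] x v * (q x v z * (saDist q (shiftPol π x v) z n y u' * f y u')) := by
              rw [← ENNReal.tsum_mul_left]
              exact tsum_congr fun z => by ring
    _ = ∑' (v : C) (z : S) (y : S) (u' : C), π [] x v * (q x v z *
          (saDist q (shiftPol π x v) z n y u' * f y u')) := tsum_comm4 _
    _ = ∑' v : C, π [] x v * ∑' z : S, q x v z * costAt q (shiftPol π x v) z n f := by
        refine tsum_congr fun v => ?_
        have hz : ∀ z : S, (∑' (y : S) (u' : C), π [] x v *
              (q x v z * (saDist q (shiftPol π x v) z n y u' * f y u')))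
            = π [] x v * (q x v z * costAt q (shiftPol π x v) z n f) := fun z => by
          calc ∑' (y : S) (u' : C), π [] x v *
                (q x v z * (saDist q (shiftPol π x v) z n y u' * f y u'))
              = ∑' (y : S) (u' : C), (π [] x v * q x v z) *
                  (saDist q (shiftPol π x v) z n y u' * f y u') :=
                tsum_congr fun y => tsum_congr fun u' => by ring
            _ = ∑' (y : S), (π [] x v * q x v z) *
                  ∑' (u' : C), saDist q (shiftPol π x v) z n y u' * f y u' :=
                tsum_congr fun y => ENNReal.tsum_mul_left
            _ = (π [] x v * q x v z) *
                  ∑' (y : S) (u' : C), saDist q (shiftPol π x v) z n y u' * f y u' :=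
                ENNReal.tsum_mul_left
            _ = π [] x v * (q x v z * costAt q (shiftPol π x v) z n f) := by
                rw [mul_assoc]; rfl
        rw [tsum_congr hz, ENNReal.tsum_mul_left]

/-- The total expected cost with nonnegative one-stage cost `f`. -/
def JT (q : S → C → S → ℝ≥0∞) (f : S → C → ℝ≥0∞) (π : Policy S C) (x : S) : ℝ≥0∞ :=
  ∑' n : ℕ, costAt q π x n f

lemma Jplus_eq_JT (q : S → C → S → ℝ≥0∞) (g : S → C → EReal) (π : Policy S C) (x : S) :
    Jplus q g π x = JT q (gPos g) π x := rfl

lemma Jminus_eq_JT (q : S → C → S → ℝ≥0∞) (g : S → C → EReal) (π : Policy S C) (x : S) :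
    Jminus q g π x = JT q (gNeg g) π x := rfl

/-- The fundamental one-step recursion for total expected costs. -/
lemma JT_rec (q : S → C → S → ℝ≥0∞) (f : S → C → ℝ≥0∞) (π : Policy S C) (x : S) :
    JT q f π x = ∑' u : C, π [] x u *
      (f x u + ∑' z : S, q x u z * JT q f (shiftPol π x u) z) := by
  rw [JT, tsum_eq_zero_add' ENNReal.summable, costAt_zero]
  have h2 : (∑' n : ℕ, costAt q π x (n + 1) f)
      = ∑' u : C, π [] x u * ∑' z : S, q x u z * JT q f (shiftPol π x u) z := by
    calc (∑' n : ℕ, costAt q π x (n + 1) f)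
        = ∑' (n : ℕ) (v : C), π [] x v * ∑' z : S, q x v z * costAt q (shiftPol π x v) z n f :=
          tsum_congr fun n => costAt_succ q π x n f
      _ = ∑' (v : C) (n : ℕ), π [] x v * ∑' z : S, q x v z * costAt q (shiftPol π x v) z n f :=
          ENNReal.tsum_comm
      _ = ∑' u : C, π [] x u * ∑' z : S, q x u z * JT q f (shiftPol π x u) z := by
          refine tsum_congr fun v => ?_
          rw [ENNReal.tsum_mul_left]
          congr 1
          rw [ENNReal.tsum_comm]
          refine tsum_congr fun z => ?_
          rw [ENNReal.tsum_mul_left]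
          rfl
  rw [h2, ← ENNReal.tsum_add]
  exact tsum_congr fun u => (mul_add _ _ _).symm
/-! ### Policy constructions -/

lemma isPolicy_shiftPol {U : S → Set C} {π : Policy S C} (hπ : IsPolicy U π) (x : S) (u : C) :
    IsPolicy U (shiftPol π x u) := fun h y => hπ (h ++ [(x, u)]) y

/-- The deterministic stationary policy induced by a selection `d`. -/
def pointPol (d : S → C) : Policy S C := fun _ y u' => if u' = d y then 1 else 0

lemma isPolicy_pointPol {U : S → Set C} {d : S → C} (hd : ∀ y, d y ∈ U y) :
    IsPolicy U (pointPol d) := fun _ y =>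
  ⟨tsum_ite_eq (d y) 1, fun u' hu' => by
    by_cases h : u' = d y
    · exact h ▸ hd y
    · exact absurd (if_neg h) hu'⟩

/-- The policy that plays `u` at the first step (when starting at `x`; elsewhere the
selection `d`), and thereafter follows `σ z`, where `z` is the state reached after the
first transition. -/
def compPol (x : S) (u : C) (d : S → C) (σ : S → Policy S C) : Policy S C :=
  fun h y => if h = [] then (fun u' => if u' = (if y = x then u else d y) then 1 else 0)
    else σ (initOf h.dropLast y) h.dropLast y

lemma isPolicy_compPol {U : S → Set C} {x : S} {u : C} {d : S → C} {σ : S → Policy S C}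
    (hu : u ∈ U x) (hd : ∀ y, d y ∈ U y) (hσ : ∀ z, IsPolicy U (σ z)) :
    IsPolicy U (compPol x u d σ) := by
  intro h y
  by_cases hh : h = []
  · subst hh
    rw [compPol, if_pos rfl]
    refine ⟨tsum_ite_eq _ 1, fun u' hu' => ?_⟩
    by_cases hyx : y = x
    · rw [if_pos hyx] at hu'
      by_cases h' : u' = u
      · exact h' ▸ hyx ▸ hu
      · exact absurd (if_neg h') hu'
    · rw [if_neg hyx] at hu'
      by_cases h' : u' = d y
      · exact h' ▸ hd y
      · exact absurd (if_neg h') hu'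
  · rw [compPol, if_neg hh]
    exact hσ _ _ _

lemma shiftPol_compPol (x : S) (u : C) (d : S → C) (σ : S → Policy S C)
    (h : List (S × C)) (y : S) :
    shiftPol (compPol x u d σ) x u h y = σ (initOf h y) h y := by
  rw [shiftPol, compPol, if_neg (by simp), List.dropLast_concat]

lemma JT_congr {q : S → C → S → ℝ≥0∞} {σ₁ σ₂ : Policy S C} {z : S}
    (hag : ∀ h y, initOf h y = z → σ₁ h y = σ₂ h y) (f : S → C → ℝ≥0∞) :
    JT q f σ₁ z = JT q f σ₂ z := by
  refine tsum_congr fun n => tsum_congr fun y => tsum_congr fun u => ?_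
  have hsa : saDist q σ₁ z n y u = saDist q σ₂ z n y u := by
    refine tsum_congr fun l => ?_
    by_cases h0 : initOf l.1 y = z
    · rw [histProb_congr hag l.1 y, hag l.1 y h0]
    · rw [histProb_eq_zero h0, histProb_eq_zero h0, zero_mul, zero_mul]
  rw [hsa]

/-- The one-step cost identity for a composite policy. -/
lemma JT_compPol (q : S → C → S → ℝ≥0∞) (f : S → C → ℝ≥0∞) (x : S) (u : C)
    (d : S → C) (σ : S → Policy S C) :
    JT q f (compPol x u d σ) x = f x u + ∑' z : S, q x u z * JT q f (σ z) z := by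
  rw [JT_rec]
  rw [tsum_eq_single u (fun u' hu' => by
    rw [show compPol x u d σ [] x u' = if u' = u then 1 else 0 by
      rw [compPol, if_pos rfl, if_pos rfl], if_neg hu', zero_mul])]
  rw [show compPol x u d σ [] x u = if u = u then (1:ℝ≥0∞) else 0 by
    rw [compPol, if_pos rfl, if_pos rfl], if_pos rfl, one_mul]
  congr 1
  refine tsum_congr fun z => ?_
  congr 1
  refine JT_congr (fun h y hi => ?_) f
  rw [shiftPol_compPol, hi]
/-! ### Bounds coming from the general convergence condition -/

lemma ereal_le_of_forall_le_add {a b : EReal}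
    (h : ∀ ε : ℝ≥0∞, 0 < ε → ε ≠ ⊤ → a ≤ b + (ε : EReal)) : a ≤ b := by
  rcases eq_or_ne b ⊤ with rfl | hb
  · exact le_top
  rcases eq_or_ne b ⊥ with rfl | hb'
  · have h1 := h 1 one_pos ENNReal.one_ne_top
    simpa using h1
  lift b to ℝ using ⟨hb, hb'⟩
  rcases eq_or_ne a ⊤ with rfl | ha
  · have h1 := h 1 one_pos ENNReal.one_ne_top
    rw [EReal.coe_ennreal_one, show ((b:EReal) + 1) = ((b + 1 : ℝ) : EReal) by norm_cast] at h1
    exact absurd (top_le_iff.mp h1) (EReal.coe_ne_top _)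
  rcases eq_or_ne a ⊥ with rfl | ha'
  · exact bot_le
  lift a to ℝ using ⟨ha, ha'⟩
  rw [EReal.coe_le_coe_iff]
  by_contra hba
  push_neg at hba
  have hε : (0:ℝ≥0∞) < ENNReal.ofReal ((a - b) / 2) := by
    rw [ENNReal.ofReal_pos]; linarith
  have := h _ hε ENNReal.ofReal_ne_top
  rw [EReal.coe_ennreal_ofReal, max_eq_left (by linarith : (0:ℝ) ≤ (a - b)/2),
    show ((b:EReal) + ((a-b)/2 : ℝ)) = ((b + (a-b)/2 : ℝ) : EReal) by norm_cast,
    EReal.coe_le_coe_iff] at this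
  linarith

lemma ereal_lt_add_eps {a : EReal} (ha : a ≠ ⊤) (ha' : a ≠ ⊥) {ε : ℝ≥0∞}
    (hε : 0 < ε) (hε' : ε ≠ ⊤) : a < a + (ε : EReal) := by
  lift a to ℝ using ⟨ha, ha'⟩
  rw [coe_ennreal_toReal hε', show ((a:EReal) + (ε.toReal : ℝ)) = ((a + ε.toReal : ℝ) : EReal)
    by norm_cast, EReal.coe_lt_coe_iff]
  have := ENNReal.toReal_pos hε.ne' hε'
  linarith

/-- The supremum of `J_π⁻` over all policies. -/
def Msup (U : S → Set C) (q : S → C → S → ℝ≥0∞) (g : S → C → EReal) (x : S) : ℝ≥0∞ :=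
  ⨆ π ∈ {π' : Policy S C | IsPolicy U π'}, Jminus q g π x

lemma Jminus_le_Msup {U : S → Set C} {q : S → C → S → ℝ≥0∞} {g : S → C → EReal}
    {π : Policy S C} (hπ : IsPolicy U π) (x : S) :
    Jminus q g π x ≤ Msup U q g x :=
  le_iSup₂ (f := fun π' (_ : π' ∈ {π' : Policy S C | IsPolicy U π'}) => Jminus q g π' x) π hπ

section Main

variable {U : S → Set C} {q : S → C → S → ℝ≥0∞} {g : S → C → EReal}

lemma Msup_ne_top (hGC : GC U q g) (x : S) : Msup U q g x ≠ ⊤ := hGC x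

lemma neg_Msup_le_Jpol {π : Policy S C} (hGC : GC U q g) (hπ : IsPolicy U π) (x : S) :
    -((Msup U q g x : ℝ≥0∞) : EReal) ≤ Jpol q g π x := by
  have h1 : Jminus q g π x ≤ Msup U q g x := Jminus_le_Msup hπ x
  have h2 : Jminus q g π x ≠ ⊤ := fun h => Msup_ne_top hGC x (top_le_iff.mp (h ▸ h1))
  refine le_trans ?_ (neg_coe_le_signedSum (P := Jplus q g π x) h2)
  rw [EReal.neg_le_neg_iff]
  exact EReal.coe_ennreal_le_coe_ennreal_iff.mpr h1

lemma neg_Msup_le_Jstar (hGC : GC U q g) (x : S) :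
    -((Msup U q g x : ℝ≥0∞) : EReal) ≤ Jstar U q g x :=
  le_iInf₂ fun _π hπ => neg_Msup_le_Jpol hGC hπ x

lemma Jstar_ne_bot (hGC : GC U q g) (x : S) : Jstar U q g x ≠ ⊥ := by
  intro h
  have := neg_Msup_le_Jstar hGC x
  rw [h, le_bot_iff, EReal.neg_eq_bot_iff, EReal.coe_ennreal_eq_top_iff] at this
  exact Msup_ne_top hGC x this

lemma ePos_neg_Jstar_le_Msup (hGC : GC U q g) (x : S) :
    ePos (-(Jstar U q g x)) ≤ Msup U q g x := by
  have h1 : -(Jstar U q g x) ≤ ((Msup U q g x : ℝ≥0∞) : EReal) := by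
    rw [EReal.neg_le]
    exact neg_Msup_le_Jstar hGC x
  exact le_trans (ePos_mono h1) (le_of_eq (ePos_coe_ennreal _))

/-- Key finiteness bound: the expected negative part of `J*` after one feasible
transition is dominated by `sup_π J_π⁻`. -/
lemma tsum_q_mul_le_Msup (hU : ∀ x, (U x).Nonempty) (hGC : GC U q g)
    {x : S} {u : C} (hu : u ∈ U x) (hq1 : (∑' z : S, q x u z) = 1)
    {b : S → ℝ≥0∞} (hb : ∀ z, b z ≤ Msup U q g z) :
    ∑' z : S, q x u z * b z ≤ Msup U q g x := by
  rw [ENNReal.tsum_eq_iSup_sum]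
  refine iSup_le fun F => ?_
  refine ENNReal.le_of_forall_pos_le_add fun ε hε hMx => ?_
  have hεpos : (0:ℝ≥0∞) < (ε : ℝ≥0∞) := ENNReal.coe_pos.mpr hε
  -- choose ε-maximizing policies
  have hsel : ∀ z : S, ∃ σ : Policy S C, IsPolicy U σ ∧ b z ≤ Jminus q g σ z + ε := by
    intro z
    by_cases h0 : b z = 0
    · exact ⟨pointPol fun y => (hU y).some, isPolicy_pointPol fun y => (hU y).some_mem,
        h0 ▸ zero_le⟩
    · have hbz : b z ≠ ⊤ := fun h => Msup_ne_top hGC z (top_le_iff.mp (h ▸ hb z))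
      have hlt : b z - ε < Msup U q g z :=
        lt_of_lt_of_le (ENNReal.sub_lt_self hbz h0 (ENNReal.coe_ne_zero.mpr hε.ne')) (hb z)
      rw [Msup, lt_iSup_iff] at hlt
      obtain ⟨σ, hσ⟩ := hlt
      rw [lt_iSup_iff] at hσ
      obtain ⟨hσmem, hσlt⟩ := hσ
      exact ⟨σ, hσmem, tsub_le_iff_right.mp hσlt.le⟩
  choose σ hσpol hσle using hsel
  set d : S → C := fun y => (hU y).some with hd
  have hdmem : ∀ y, d y ∈ U y := fun y => (hU y).some_mem
  have hcomp : IsPolicy U (compPol x u d σ) := isPolicy_compPol hu hdmem hσpol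
  have hJm : (∑' z : S, q x u z * Jminus q g (σ z) z) ≤ Msup U q g x := by
    refine le_trans ?_ (Jminus_le_Msup hcomp x)
    rw [Jminus_eq_JT, JT_compPol]
    have he : (∑' z : S, q x u z * Jminus q g (σ z) z)
        = ∑' z : S, q x u z * JT q (gNeg g) (σ z) z := rfl
    rw [he]
    exact le_add_self
  calc ∑ z ∈ F, q x u z * b z
      ≤ ∑ z ∈ F, q x u z * (Jminus q g (σ z) z + ε) :=
        Finset.sum_le_sum fun z _ => mul_le_mul_right (hσle z) _
    _ = ∑ z ∈ F, (q x u z * Jminus q g (σ z) z + q x u z * ε) := by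
        refine Finset.sum_congr rfl fun z _ => mul_add _ _ _
    _ = (∑ z ∈ F, q x u z * Jminus q g (σ z) z) + (∑ z ∈ F, q x u z) * ε := by
        rw [Finset.sum_add_distrib, Finset.sum_mul]
    _ ≤ Msup U q g x + 1 * ε := by
        refine add_le_add (le_trans (ENNReal.sum_le_tsum F) hJm) ?_
        exact mul_le_mul_left (le_trans (ENNReal.sum_le_tsum F) hq1.le) _
    _ = Msup U q g x + ε := by rw [one_mul]

end Main
section Main2

variable {U : S → Set C} {q : S → C → S → ℝ≥0∞} {g : S → C → EReal}

lemma Jminus_ne_top (hGC : GC U q g) {π : Policy S C} (hπ : IsPolicy U π) (x : S) :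
    Jminus q g π x ≠ ⊤ :=
  fun h => Msup_ne_top hGC x (top_le_iff.mp (h ▸ Jminus_le_Msup hπ x))

lemma Top_le_Jpol (hU : ∀ x, (U x).Nonempty) (hg : ∀ x, ∀ u ∈ U x, g x u ≠ ⊥)
    (hq : ∀ x, ∀ u ∈ U x, (∑' x' : S, q x u x') = 1) (hGC : GC U q g)
    {π : Policy S C} (hπ : IsPolicy U π) (x : S) :
    Top U q g (Jstar U q g) x ≤ Jpol q g π x := by
  classical
  have hrecP : Jplus q g π x = ∑' u : C, π [] x u *
      (gPos g x u + ∑' z : S, q x u z * Jplus q g (shiftPol π x u) z) := by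
    rw [Jplus_eq_JT, JT_rec q (gPos g) π x]
    rfl
  have hrecN : Jminus q g π x = ∑' u : C, π [] x u *
      (gNeg g x u + ∑' z : S, q x u z * Jminus q g (shiftPol π x u) z) := by
    rw [Jminus_eq_JT, JT_rec q (gNeg g) π x]
    rfl
  have hπ0 : (∑' u : C, π [] x u) = 1 := (hπ [] x).1
  have hN₁ : Jminus q g π x ≠ ⊤ := Jminus_ne_top hGC hπ x
  have hJpol : Jpol q g π x = signedSum (Jplus q g π x) (Jminus q g π x) := rfl
  by_cases hP₁ : Jplus q g π x = ⊤
  · rw [hJpol, hP₁, signedSum_top_left]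
    exact le_top
  -- find a feasible control at least as good as the randomized first step
  have hexists : ∃ u : C, π [] x u ≠ 0 ∧
      (gPos g x u + ∑' z : S, q x u z * Jplus q g (shiftPol π x u) z) + Jminus q g π x
        ≤ Jplus q g π x + (gNeg g x u + ∑' z : S, q x u z * Jminus q g (shiftPol π x u) z) := by
    by_contra hcon
    push_neg at hcon
    set A : C → ℝ≥0∞ := fun u =>
      gPos g x u + ∑' z : S, q x u z * Jplus q g (shiftPol π x u) z with hA
    set B : C → ℝ≥0∞ := fun u =>
      gNeg g x u + ∑' z : S, q x u z * Jminus q g (shiftPol π x u) z with hB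
    set δ : C → ℝ≥0∞ := fun u =>
      (A u + Jminus q g π x) - (Jplus q g π x + B u) with hδ
    have hkey : ∀ u : C, π [] x u * (Jplus q g π x + B u) + π [] x u * δ u
        = π [] x u * (A u + Jminus q g π x) := by
      intro u
      by_cases h0 : π [] x u = 0
      · rw [h0, zero_mul, zero_mul, zero_mul, add_zero]
      · rw [← mul_add]
        congr 1
        exact add_tsub_cancel_of_le (hcon u h0).le
    have hsum : (∑' u : C, π [] x u * (Jplus q g π x + B u)) + (∑' u : C, π [] x u * δ u)
        = ∑' u : C, π [] x u * (A u + Jminus q g π x) := by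
      rw [← ENNReal.tsum_add]
      exact tsum_congr hkey
    have e1 : (∑' u : C, π [] x u * (Jplus q g π x + B u))
        = Jplus q g π x + Jminus q g π x := by
      calc ∑' u : C, π [] x u * (Jplus q g π x + B u)
          = ∑' u : C, (π [] x u * Jplus q g π x + π [] x u * B u) :=
            tsum_congr fun u => mul_add _ _ _
        _ = (∑' u : C, π [] x u * Jplus q g π x) + ∑' u : C, π [] x u * B u :=
            ENNReal.tsum_add
        _ = Jplus q g π x + Jminus q g π x := by
            rw [ENNReal.tsum_mul_right, hπ0, one_mul, ← hrecN]
    have e2 : (∑' u : C, π [] x u * (A u + Jminus q g π x))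
        = Jplus q g π x + Jminus q g π x := by
      calc ∑' u : C, π [] x u * (A u + Jminus q g π x)
          = ∑' u : C, (π [] x u * A u + π [] x u * Jminus q g π x) :=
            tsum_congr fun u => mul_add _ _ _
        _ = (∑' u : C, π [] x u * A u) + ∑' u : C, π [] x u * Jminus q g π x :=
            ENNReal.tsum_add
        _ = Jplus q g π x + Jminus q g π x := by
            rw [ENNReal.tsum_mul_right, hπ0, one_mul, ← hrecP]
    rw [e1, e2] at hsum
    have hne : Jplus q g π x + Jminus q g π x ≠ ⊤ := ENNReal.add_ne_top.mpr ⟨hP₁, hN₁⟩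
    have hδ0 : (∑' u : C, π [] x u * δ u) = 0 := by
      nth_rewrite 2 [← add_zero (Jplus q g π x + Jminus q g π x)] at hsum
      exact (ENNReal.add_right_inj hne).mp hsum
    have hsupp : ∃ u : C, π [] x u ≠ 0 := by
      by_contra hall
      push_neg at hall
      rw [ENNReal.tsum_eq_zero.mpr hall] at hπ0
      exact one_ne_zero hπ0.symm
    obtain ⟨u, hu0⟩ := hsupp
    rcases mul_eq_zero.mp (ENNReal.tsum_eq_zero.mp hδ0 u) with h | h
    · exact hu0 h
    · exact absurd (tsub_eq_zero_iff_le.mp h) (not_le.mpr (hcon u hu0))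
  obtain ⟨u, hu0, hukey⟩ := hexists
  have huU : u ∈ U x := (hπ [] x).2 u hu0
  have hAu : (gPos g x u + ∑' z : S, q x u z * Jplus q g (shiftPol π x u) z) ≠ ⊤ := by
    intro h
    have hle : π [] x u *
        (gPos g x u + ∑' z : S, q x u z * Jplus q g (shiftPol π x u) z)
          ≤ Jplus q g π x := hrecP ▸ ENNReal.le_tsum u
    rw [h, ENNReal.mul_top hu0] at hle
    exact hP₁ (top_le_iff.mp hle)
  have hBu : (gNeg g x u + ∑' z : S, q x u z * Jminus q g (shiftPol π x u) z) ≠ ⊤ := by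
    intro h
    have hle : π [] x u *
        (gNeg g x u + ∑' z : S, q x u z * Jminus q g (shiftPol π x u) z)
          ≤ Jminus q g π x := hrecN ▸ ENNReal.le_tsum u
    rw [h, ENNReal.mul_top hu0] at hle
    exact hN₁ (top_le_iff.mp hle)
  have hN₂ : (ePos (-(g x u)) + ∑' z : S, q x u z * ePos (-(Jstar U q g z))) ≠ ⊤ := by
    refine ENNReal.add_ne_top.mpr ⟨ePos_neg_ne_top (hg x u huU), ?_⟩
    exact fun h => Msup_ne_top hGC x (top_le_iff.mp (h ▸
      tsum_q_mul_le_Msup hU hGC huU (hq x u huU) fun z => ePos_neg_Jstar_le_Msup hGC z))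
  -- pointwise comparison of `J*` with the shifted policy values
  have hstep : (ePos (g x u) + ∑' z : S, q x u z * ePos (Jstar U q g z))
        + (gNeg g x u + ∑' z : S, q x u z * Jminus q g (shiftPol π x u) z)
      ≤ (gPos g x u + ∑' z : S, q x u z * Jplus q g (shiftPol π x u) z)
        + (ePos (-(g x u)) + ∑' z : S, q x u z * ePos (-(Jstar U q g z))) := by
    have hz : ∀ z : S, ePos (Jstar U q g z) + Jminus q g (shiftPol π x u) z
        ≤ Jplus q g (shiftPol π x u) z + ePos (-(Jstar U q g z)) := by
      intro z
      have hb : Jstar U q g z ≠ ⊥ := Jstar_ne_bot hGC z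
      have hnz : Jminus q g (shiftPol π x u) z ≠ ⊤ :=
        Jminus_ne_top hGC (isPolicy_shiftPol hπ x u) z
      have h1 : Jstar U q g z ≤ Jpol q g (shiftPol π x u) z :=
        iInf₂_le _ (isPolicy_shiftPol hπ x u)
      rw [← signedSum_ePos hb,
        show Jpol q g (shiftPol π x u) z
          = signedSum (Jplus q g (shiftPol π x u) z) (Jminus q g (shiftPol π x u) z) from rfl]
        at h1
      exact (signedSum_le_signedSum_iff (ePos_neg_ne_top hb) hnz).mp h1
    have hs : (∑' z : S, q x u z * ePos (Jstar U q g z))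
          + (∑' z : S, q x u z * Jminus q g (shiftPol π x u) z)
        ≤ (∑' z : S, q x u z * Jplus q g (shiftPol π x u) z)
          + (∑' z : S, q x u z * ePos (-(Jstar U q g z))) := by
      rw [← ENNReal.tsum_add, ← ENNReal.tsum_add]
      exact ENNReal.tsum_le_tsum fun z => by
        rw [← mul_add, ← mul_add]
        exact mul_le_mul_right (hz z) _
    have hgg : gPos g x u = ePos (g x u) := rfl
    have hgg' : gNeg g x u = ePos (-(g x u)) := rfl
    calc (ePos (g x u) + ∑' z : S, q x u z * ePos (Jstar U q g z))
          + (gNeg g x u + ∑' z : S, q x u z * Jminus q g (shiftPol π x u) z)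
        = (ePos (g x u) + gNeg g x u)
            + ((∑' z : S, q x u z * ePos (Jstar U q g z))
              + ∑' z : S, q x u z * Jminus q g (shiftPol π x u) z) := by ring
      _ ≤ (ePos (g x u) + gNeg g x u)
            + ((∑' z : S, q x u z * Jplus q g (shiftPol π x u) z)
              + ∑' z : S, q x u z * ePos (-(Jstar U q g z))) := add_le_add le_rfl hs
      _ = (gPos g x u + ∑' z : S, q x u z * Jplus q g (shiftPol π x u) z)
            + (ePos (-(g x u)) + ∑' z : S, q x u z * ePos (-(Jstar U q g z))) := by
          rw [hgg, hgg']; ring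
  calc Top U q g (Jstar U q g) x
      ≤ signedSum (ePos (g x u) + ∑' z : S, q x u z * ePos (Jstar U q g z))
          (ePos (-(g x u)) + ∑' z : S, q x u z * ePos (-(Jstar U q g z))) :=
        iInf₂_le _ huU
    _ ≤ signedSum (gPos g x u + ∑' z : S, q x u z * Jplus q g (shiftPol π x u) z)
          (gNeg g x u + ∑' z : S, q x u z * Jminus q g (shiftPol π x u) z) :=
        signedSum_le_signedSum hN₂ hBu hstep
    _ ≤ signedSum (Jplus q g π x) (Jminus q g π x) :=
        signedSum_le_signedSum hBu hN₁ hukey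
    _ = Jpol q g π x := rfl

end Main2
section Main3

variable {U : S → Set C} {q : S → C → S → ℝ≥0∞} {g : S → C → EReal}

lemma Jstar_le_Top (hU : ∀ x, (U x).Nonempty) (hg : ∀ x, ∀ u ∈ U x, g x u ≠ ⊥)
    (hq : ∀ x, ∀ u ∈ U x, (∑' x' : S, q x u x') = 1) (hGC : GC U q g) (x : S) :
    Jstar U q g x ≤ Top U q g (Jstar U q g) x := by
  classical
  refine le_iInf₂ fun u huU => ?_
  have hN₂ : (ePos (-(g x u)) + ∑' z : S, q x u z * ePos (-(Jstar U q g z))) ≠ ⊤ := by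
    refine ENNReal.add_ne_top.mpr ⟨ePos_neg_ne_top (hg x u huU), ?_⟩
    exact fun h => Msup_ne_top hGC x (top_le_iff.mp (h ▸
      tsum_q_mul_le_Msup hU hGC huU (hq x u huU) fun z => ePos_neg_Jstar_le_Msup hGC z))
  by_cases hP₂ : (ePos (g x u) + ∑' z : S, q x u z * ePos (Jstar U q g z)) = ⊤
  · rw [hP₂, signedSum_top_left]
    exact le_top
  refine ereal_le_of_forall_le_add fun ε hε hεtop => ?_
  -- select ε-optimal policies from each successor state
  have hsel : ∀ z : S, ∃ σ : Policy S C, IsPolicy U σ ∧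
      Jpol q g σ z ≤ Jstar U q g z + (ε : EReal) := by
    intro z
    by_cases hz : Jstar U q g z = ⊤
    · refine ⟨pointPol fun y => (hU y).some,
        isPolicy_pointPol fun y => (hU y).some_mem, ?_⟩
      rw [hz, EReal.top_add_of_ne_bot (EReal.coe_ennreal_ne_bot _)]
      exact le_top
    · have hlt : (⨅ π' ∈ {π' : Policy S C | IsPolicy U π'}, Jpol q g π' z)
          < Jstar U q g z + (ε : EReal) :=
        ereal_lt_add_eps hz (Jstar_ne_bot hGC z) hε hεtop
      rw [iInf_lt_iff] at hlt
      obtain ⟨σ, hlt⟩ := hlt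
      rw [iInf_lt_iff] at hlt
      obtain ⟨hmem, hlt⟩ := hlt
      exact ⟨σ, hmem, hlt.le⟩
  choose σ hσpol hσle using hsel
  have hcomp : IsPolicy U (compPol x u (fun y => (hU y).some) σ) :=
    isPolicy_compPol huU (fun y => (hU y).some_mem) hσpol
  have hcompP : Jplus q g (compPol x u (fun y => (hU y).some) σ) x
      = gPos g x u + ∑' z : S, q x u z * Jplus q g (σ z) z := by
    rw [Jplus_eq_JT, JT_compPol]
    rfl
  have hcompN : Jminus q g (compPol x u (fun y => (hU y).some) σ) x
      = gNeg g x u + ∑' z : S, q x u z * Jminus q g (σ z) z := by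
    rw [Jminus_eq_JT, JT_compPol]
    rfl
  have hNcomp : (gNeg g x u + ∑' z : S, q x u z * Jminus q g (σ z) z) ≠ ⊤ :=
    hcompN ▸ Jminus_ne_top hGC hcomp x
  -- the pointwise inequality, rearranged in `ℝ≥0∞`
  have hz2 : ∀ z : S, Jplus q g (σ z) z + ePos (-(Jstar U q g z))
      ≤ (ePos (Jstar U q g z) + ε) + Jminus q g (σ z) z := by
    intro z
    have hb : Jstar U q g z ≠ ⊥ := Jstar_ne_bot hGC z
    have hnz : Jminus q g (σ z) z ≠ ⊤ := Jminus_ne_top hGC (hσpol z) z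
    have h1 : Jpol q g (σ z) z ≤ signedSum (ePos (Jstar U q g z) + ε) (ePos (-(Jstar U q g z))) := by
      rw [signedSum_add_const (ePos_neg_ne_top hb) hεtop, signedSum_ePos hb]
      exact hσle z
    rw [show Jpol q g (σ z) z
        = signedSum (Jplus q g (σ z) z) (Jminus q g (σ z) z) from rfl] at h1
    exact (signedSum_le_signedSum_iff hnz (ePos_neg_ne_top hb)).mp h1
  -- summed comparison
  have hsum : (gPos g x u + ∑' z : S, q x u z * Jplus q g (σ z) z)
        + (ePos (-(g x u)) + ∑' z : S, q x u z * ePos (-(Jstar U q g z)))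
      ≤ ((ePos (g x u) + ∑' z : S, q x u z * ePos (Jstar U q g z)) + ε)
        + (gNeg g x u + ∑' z : S, q x u z * Jminus q g (σ z) z) := by
    have hs : (∑' z : S, q x u z * Jplus q g (σ z) z)
          + (∑' z : S, q x u z * ePos (-(Jstar U q g z)))
        ≤ ((∑' z : S, q x u z * ePos (Jstar U q g z)) + ε)
          + (∑' z : S, q x u z * Jminus q g (σ z) z) := by
      have hεsum : (∑' z : S, q x u z * ε) = ε := by
        rw [ENNReal.tsum_mul_right, hq x u huU, one_mul]
      calc (∑' z : S, q x u z * Jplus q g (σ z) z)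
            + (∑' z : S, q x u z * ePos (-(Jstar U q g z)))
          = ∑' z : S, q x u z * (Jplus q g (σ z) z + ePos (-(Jstar U q g z))) := by
            rw [← ENNReal.tsum_add]
            exact tsum_congr fun z => (mul_add _ _ _).symm
        _ ≤ ∑' z : S, q x u z * ((ePos (Jstar U q g z) + ε) + Jminus q g (σ z) z) :=
            ENNReal.tsum_le_tsum fun z => mul_le_mul_right (hz2 z) _
        _ = ∑' z : S, (q x u z * ePos (Jstar U q g z) + q x u z * ε
              + q x u z * Jminus q g (σ z) z) := tsum_congr fun z => by ring
        _ = ((∑' z : S, q x u z * ePos (Jstar U q g z)) + ∑' z : S, q x u z * ε)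
              + ∑' z : S, q x u z * Jminus q g (σ z) z := by
            rw [ENNReal.tsum_add, ENNReal.tsum_add]
        _ = ((∑' z : S, q x u z * ePos (Jstar U q g z)) + ε)
              + ∑' z : S, q x u z * Jminus q g (σ z) z := by rw [hεsum]
    have hgg : gPos g x u = ePos (g x u) := rfl
    have hgg' : gNeg g x u = ePos (-(g x u)) := rfl
    calc (gPos g x u + ∑' z : S, q x u z * Jplus q g (σ z) z)
          + (ePos (-(g x u)) + ∑' z : S, q x u z * ePos (-(Jstar U q g z)))
        = (gPos g x u + ePos (-(g x u)))
            + ((∑' z : S, q x u z * Jplus q g (σ z) z)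
              + ∑' z : S, q x u z * ePos (-(Jstar U q g z))) := by ring
      _ ≤ (gPos g x u + ePos (-(g x u)))
            + (((∑' z : S, q x u z * ePos (Jstar U q g z)) + ε)
              + ∑' z : S, q x u z * Jminus q g (σ z) z) := add_le_add le_rfl hs
      _ = ((ePos (g x u) + ∑' z : S, q x u z * ePos (Jstar U q g z)) + ε)
            + (gNeg g x u + ∑' z : S, q x u z * Jminus q g (σ z) z) := by
          rw [hgg, hgg']; ring
  calc Jstar U q g x
      ≤ Jpol q g (compPol x u (fun y => (hU y).some) σ) x := iInf₂_le _ hcomp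
    _ = signedSum (gPos g x u + ∑' z : S, q x u z * Jplus q g (σ z) z)
          (gNeg g x u + ∑' z : S, q x u z * Jminus q g (σ z) z) := by
        rw [show Jpol q g (compPol x u (fun y => (hU y).some) σ) x
          = signedSum (Jplus q g (compPol x u (fun y => (hU y).some) σ) x)
              (Jminus q g (compPol x u (fun y => (hU y).some) σ) x) from rfl,
          hcompP, hcompN]
    _ ≤ signedSum ((ePos (g x u) + ∑' z : S, q x u z * ePos (Jstar U q g z)) + ε)
          (ePos (-(g x u)) + ∑' z : S, q x u z * ePos (-(Jstar U q g z))) :=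
        signedSum_le_signedSum hNcomp hN₂ hsum
    _ = signedSum (ePos (g x u) + ∑' z : S, q x u z * ePos (Jstar U q g z))
          (ePos (-(g x u)) + ∑' z : S, q x u z * ePos (-(Jstar U q g z))) + (ε : EReal) :=
        signedSum_add_const hN₂ hεtop

end Main3

/-- optimality equation: `J* = T(J*)`. -/
theorem optimality_equation {S C : Type} [Countable S] [Countable C]
    (U : S → Set C) (q : S → C → S → ℝ≥0∞) (g : S → C → EReal)
    (hU : ∀ x, (U x).Nonempty)
    (hg : ∀ x, ∀ u ∈ U x, g x u ≠ ⊥)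
    (hq : ∀ x, ∀ u ∈ U x, (∑' x' : S, q x u x') = 1)
    (hGC : GC U q g) :
    ∀ x : S, Jstar U q g x = Top U q g (Jstar U q g) x := by
  intro x
  refine le_antisymm (Jstar_le_Top hU hg hq hGC x) ?_
  exact le_iInf₂ fun π hπ => Top_le_Jpol hU hg hq hGC hπ x

end GCMDP

end
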